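/- Let G ≤ S_fin(ℕ) be a group of finitary permutations of ℕ and let w(ȳ) = u_n v_n ⋯ u_1 v_1 be a reduced word with constants v_i ∈ G \ {1} such that the word u_n u_{n-1}⋯u_1 (obtained by deleting all constants and reducing in the free group) is non-trivial. Then the set X_{0̄} = ⋂_{i=1}^n v_1^{-1}⋯v_{i-1}^{-1}(ℕ \ supp(v_i)) is cofinite (and in particular infinite), and for any tuple ḡ ∈ G^t whose members have supports contained in X_{0̄} and which satisfies u_n⋯u_1(ḡ)(p) ≠ p for some p ∈ X_{0̄}, one has w(ḡ) ≠ 1. -/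

import Mathlib

/-- Evaluation at `ḡ` of a word with constants `w = u_n v_n ⋯ u_1 v_1` over the group
of permutations of `ℕ`, encoded as the list of blocks `[(u₁, v₁), …, (u_n, v_n)]`. -/
def evalWordC {t : ℕ} (g : Fin t → Equiv.Perm ℕ) :
    List (FreeGroup (Fin t) × Equiv.Perm ℕ) → Equiv.Perm ℕ
  | [] => 1
  | (u, v) :: rest => evalWordC g rest * (FreeGroup.lift g) u * v

/-- `X_{0̄} = ⋂_{i} v₁⁻¹⋯v_{i-1}⁻¹(ℕ \ supp(vᵢ))` for the list of constants
`[v₁, …, v_n]` (first applied first). -/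
def X0 : List (Equiv.Perm ℕ) → Set ℕ
  | [] => Set.univ
  | v :: rest => {x : ℕ | v x = x} ∩ (fun x : ℕ => v x) ⁻¹' X0 rest

lemma X0_cons_subset (v : Equiv.Perm ℕ) (l : List (Equiv.Perm ℕ)) :
    X0 (v :: l) ⊆ X0 l := by
  rintro x ⟨h1, h2⟩
  simp only [Set.mem_setOf_eq] at h1
  simp only [Set.mem_preimage, h1] at h2
  exact h2

lemma X0_cofinite : ∀ (l : List (Equiv.Perm ℕ)),
    (∀ v ∈ l, {x : ℕ | v x ≠ x}.Finite) → ((X0 l)ᶜ : Set ℕ).Finite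
  | [], _ => by simp [X0]
  | v :: rest, h => by
    have h1 : ({x : ℕ | v x = x}ᶜ : Set ℕ).Finite := h v (by simp)
    have h2 : ((X0 rest)ᶜ : Set ℕ).Finite :=
      X0_cofinite rest (fun w hw => h w (by simp [hw]))
    have h3 : (((fun x : ℕ => v x) ⁻¹' X0 rest)ᶜ : Set ℕ).Finite := by
      rw [← Set.preimage_compl]
      exact h2.preimage (v.injective.injOn)
    simpa [X0, Set.compl_inter] using h1.union h3

lemma lift_supp {t : ℕ} (g : Fin t → Equiv.Perm ℕ) (S : Set ℕ)
    (hg : ∀ i, {x : ℕ | g i x ≠ x} ⊆ S) (u : FreeGroup (Fin t)) :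
    ∀ x, (FreeGroup.lift g u) x ≠ x → x ∈ S := by
  induction u using FreeGroup.induction_on with
  | C1 => simp
  | of i => intro x hx; exact hg i (by simpa using hx)
  | inv_of i ih =>
    intro x hx
    apply ih x
    simp only [map_inv] at hx
    intro he
    exact hx ((Equiv.Perm.inv_eq_iff_eq).mpr he.symm)
  | mul a b iha ihb =>
    intro x hx
    rw [map_mul] at hx
    by_cases h : (FreeGroup.lift g b) x = x
    · exact iha x (by simpa [Equiv.Perm.mul_apply, h] using hx)
    · exact ihb x h

lemma mem_of_supp (σ : Equiv.Perm ℕ) (S T : Set ℕ)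
    (hσ : ∀ x, σ x ≠ x → x ∈ S) (hST : S ⊆ T) (x : ℕ) (hx : x ∈ T) : σ x ∈ T := by
  by_cases h : σ x = x
  · rw [h]; exact hx
  · have : σ (σ x) ≠ σ x := fun he => h (σ.injective he)
    exact hST (hσ _ this)

lemma eval_key {t : ℕ} (g : Fin t → Equiv.Perm ℕ) (S : Set ℕ)
    (hg : ∀ i, {x : ℕ | g i x ≠ x} ⊆ S) :
    ∀ (blocks : List (FreeGroup (Fin t) × Equiv.Perm ℕ)) (p : ℕ),
      p ∈ X0 (blocks.map Prod.snd) → S ⊆ X0 (blocks.map Prod.snd) →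
      evalWordC g blocks p = (FreeGroup.lift g) ((blocks.map Prod.fst).reverse.prod) p
  | [], p, _, _ => by simp [evalWordC]
  | (u, v) :: rest, p, hp, hS => by
    obtain ⟨h1, h2⟩ := hp
    simp only [Set.mem_setOf_eq] at h1
    simp only [Set.mem_preimage, h1] at h2
    have hS' : S ⊆ X0 (rest.map Prod.snd) :=
      hS.trans (X0_cons_subset _ _)
    have hq : (FreeGroup.lift g u) p ∈ X0 (rest.map Prod.snd) :=
      mem_of_supp _ S _ (lift_supp g S hg u) hS' p h2
    have := eval_key g S hg rest ((FreeGroup.lift g u) p) hq hS'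
    show (evalWordC g rest * (FreeGroup.lift g) u * v) p = _
    simp only [Equiv.Perm.mul_apply, h1, this]
    simp [map_mul]

/-- Let `G ≤ S_fin(ℕ)` and let `w(ȳ) = u_n v_n ⋯ u_1 v_1` be a reduced
word whose constants `vᵢ` are non-trivial finitary permutations of `ℕ`, such that the
word `u_n ⋯ u_1` (delete all constants, reduce in the free group) is non-trivial.
Then `X_{0̄}` is cofinite (in particular infinite), and any tuple `ḡ` of finitary
permutations supported in `X_{0̄}` with `u_n⋯u_1(ḡ)(p) ≠ p` for some `p ∈ X_{0̄}`
satisfies `w(ḡ) ≠ 1`. -/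
theorem stmt17 {t : ℕ} (blocks : List (FreeGroup (Fin t) × Equiv.Perm ℕ))
    (hb : ∀ b ∈ blocks, b.2 ≠ 1 ∧ {x : ℕ | b.2 x ≠ x}.Finite)
    (hu : ((blocks.map Prod.fst).reverse).prod ≠ 1) :
    ((X0 (blocks.map Prod.snd))ᶜ : Set ℕ).Finite ∧
    ∀ (g : Fin t → Equiv.Perm ℕ) (p : ℕ),
      (∀ i, {x : ℕ | g i x ≠ x}.Finite) →
      (∀ i, {x : ℕ | g i x ≠ x} ⊆ X0 (blocks.map Prod.snd)) →
      p ∈ X0 (blocks.map Prod.snd) →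
      ((FreeGroup.lift g) ((blocks.map Prod.fst).reverse.prod)) p ≠ p →
      evalWordC g blocks ≠ 1 := by
  constructor
  · apply X0_cofinite
    intro v hv
    simp only [List.mem_map] at hv
    obtain ⟨b, hbmem, rfl⟩ := hv
    exact (hb b hbmem).2
  · intro g p _ hsupp hp hne hcontra
    apply hne
    have := eval_key g (X0 (blocks.map Prod.snd)) hsupp blocks p hp subset_rfl
    rw [← this, hcontra]
    rfl
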